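/- Let f ∈ A be an infinitesimal generator (Re(f(z)/z) ≥ 0 on D\{0}) with Taylor expansion f(z) = z + a₂z² + a₃z³ + ..., and for r > 0 let G_r = (Id + r f)^{-1} be its nonlinear resolvent with expansion G_r(z) = b₁z + b₂z² + b₃z³ + .... Then b₁ = 1/(1+r), b₂ = -r a₂/(1+r)³, b₃ = 2r² a₂²/(1+r)⁵ - r a₃/(1+r)⁴, and consequently b₁b₃ - λ b₂² = -(r/(1+r)⁵)[a₃ - (2-λ)(r/(1+r)) a₂²] for every λ ∈ ℂ. -/

import Mathlib

open Metric Complex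

/-- Coefficients of the nonlinear resolvent: if `f ∈ A` is a generator with Taylor
coefficients `a₂, a₃` and `G_r` is its resolvent (the holomorphic self-map of the disk
solving `G_r z + r f (G_r z) = z`, `r > 0`) with coefficients `b₁, b₂, b₃`, then
`b₁ = 1/(1+r)`, `b₂ = -r a₂/(1+r)³`, `b₃ = 2r² a₂²/(1+r)⁵ - r a₃/(1+r)⁴`, and hence
`b₁ b₃ - λ b₂² = -(r/(1+r)⁵) (a₃ - (2-λ)(r/(1+r)) a₂²)` for all `λ ∈ ℂ`. -/
theorem resolvent_coefficients
    (r : ℝ) (hr : 0 < r)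
    (f : ℂ → ℂ) (hf : DifferentiableOn ℂ f (ball (0:ℂ) 1))
    (hf0 : f 0 = 0) (hf1 : deriv f 0 = 1)
    (hgen : ∀ z ∈ ball (0:ℂ) 1, z ≠ 0 → 0 ≤ (f z / z).re)
    (G : ℂ → ℂ) (hG : DifferentiableOn ℂ G (ball (0:ℂ) 1))
    (hGmap : ∀ z ∈ ball (0:ℂ) 1, G z ∈ ball (0:ℂ) 1)
    (hGeq : ∀ z ∈ ball (0:ℂ) 1, G z + (r : ℂ) * f (G z) = z) :
    deriv G 0 = 1 / (1 + (r:ℂ)) ∧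
    iteratedDeriv 2 G 0 / 2 =
      -(r:ℂ) * (iteratedDeriv 2 f 0 / 2) / (1 + (r:ℂ))^3 ∧
    iteratedDeriv 3 G 0 / 6 =
      2 * (r:ℂ)^2 * (iteratedDeriv 2 f 0 / 2)^2 / (1 + (r:ℂ))^5 -
        (r:ℂ) * (iteratedDeriv 3 f 0 / 6) / (1 + (r:ℂ))^4 ∧
    ∀ lam : ℂ,
      deriv G 0 * (iteratedDeriv 3 G 0 / 6) - lam * (iteratedDeriv 2 G 0 / 2)^2 =
        -((r:ℂ) / (1 + (r:ℂ))^5) *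
          (iteratedDeriv 3 f 0 / 6 -
            (2 - lam) * ((r:ℂ) / (1 + (r:ℂ))) * (iteratedDeriv 2 f 0 / 2)^2) := by
  have hball : IsOpen (ball (0:ℂ) 1) := isOpen_ball
  have h0 : (0:ℂ) ∈ ball (0:ℂ) 1 := by simp
  -- G 0 = 0
  have hrc : (r:ℂ) ≠ 0 := by exact_mod_cast hr.ne'
  have hG0 : G 0 = 0 := by
    by_contra hne
    have hGm := hGmap 0 h0
    have heq := hGeq 0 h0
    have h1 : f (G 0) / G 0 = -1/(r:ℂ) := by
      field_simp [hne, hrc]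
      linear_combination heq
    have h2 := hgen (G 0) hGm hne
    rw [h1] at h2
    have h3 : ((-1 : ℂ)/(r:ℂ)) = (((-1/r : ℝ)) : ℂ) := by push_cast; ring
    rw [h3, Complex.ofReal_re] at h2
    have h4 : (0:ℝ) < 1/r := by positivity
    rw [neg_div] at h2
    linarith
  have hfa : AnalyticOnNhd ℂ f (ball (0:ℂ) 1) := hf.analyticOnNhd hball
  have hGa : AnalyticOnNhd ℂ G (ball (0:ℂ) 1) := hG.analyticOnNhd hball
  set g1 := deriv G with hg1def
  set g2 := deriv g1 with hg2def
  set f1 := deriv f with hf1def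
  set f2 := deriv f1 with hf2def
  have hg1a : AnalyticOnNhd ℂ g1 (ball (0:ℂ) 1) := hGa.deriv
  have hg2a : AnalyticOnNhd ℂ g2 (ball (0:ℂ) 1) := hg1a.deriv
  have hf1a : AnalyticOnNhd ℂ f1 (ball (0:ℂ) 1) := hfa.deriv
  have hf2a : AnalyticOnNhd ℂ f2 (ball (0:ℂ) 1) := hf1a.deriv
  -- step 1
  have key1 : ∀ z ∈ ball (0:ℂ) 1, g1 z + r * (f1 (G z) * g1 z) = 1 := by
    intro z hz
    have hGz := hGmap z hz
    have hd : HasDerivAt (fun w => G w + (r:ℂ) * f (G w))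
        (g1 z + r * (f1 (G z) * g1 z)) z := by
      have hG' : HasDerivAt G (g1 z) z := (hGa z hz).differentiableAt.hasDerivAt
      have hf' : HasDerivAt f (f1 (G z)) (G z) := (hfa _ hGz).differentiableAt.hasDerivAt
      exact (hG'.add ((hf'.comp z hG').const_mul (r:ℂ)))
    have hev : (fun w => G w + (r:ℂ) * f (G w)) =ᶠ[nhds z] id := by
      filter_upwards [hball.mem_nhds hz] with w hw using hGeq w hw
    have := hev.deriv_eq
    rw [hd.deriv, deriv_id] at this
    exact this
  -- step 2
  have key2 : ∀ z ∈ ball (0:ℂ) 1,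
      g2 z + r * ((f2 (G z) * g1 z) * g1 z + f1 (G z) * g2 z) = 0 := by
    intro z hz
    have hGz := hGmap z hz
    have hG' : HasDerivAt G (g1 z) z := (hGa z hz).differentiableAt.hasDerivAt
    have hg1' : HasDerivAt g1 (g2 z) z := (hg1a z hz).differentiableAt.hasDerivAt
    have hf1' : HasDerivAt f1 (f2 (G z)) (G z) := (hf1a _ hGz).differentiableAt.hasDerivAt
    have hd : HasDerivAt (fun w => g1 w + (r:ℂ) * (f1 (G w) * g1 w))
        (g2 z + r * ((f2 (G z) * g1 z) * g1 z + f1 (G z) * g2 z)) z := by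
      exact hg1'.add ((((hf1'.comp z hG').mul hg1')).const_mul (r:ℂ))
    have hev : (fun w => g1 w + (r:ℂ) * (f1 (G w) * g1 w)) =ᶠ[nhds z] fun _ => (1:ℂ) := by
      filter_upwards [hball.mem_nhds hz] with w hw using key1 w hw
    have := hev.deriv_eq
    rw [hd.deriv, deriv_const] at this
    exact this
  -- step 3 at 0
  have key3 : iteratedDeriv 3 G 0 + r *
      ((deriv f2 0 * g1 0 * g1 0 + f2 0 * g2 0) * g1 0 + f2 0 * g1 0 * g2 0 +
        (f2 0 * g1 0 * g2 0 + f1 0 * iteratedDeriv 3 G 0)) = 0 := by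
    have hGz : G 0 ∈ ball (0:ℂ) 1 := hGmap 0 h0
    have hG' : HasDerivAt G (g1 0) 0 := (hGa 0 h0).differentiableAt.hasDerivAt
    have hg1' : HasDerivAt g1 (g2 0) 0 := (hg1a 0 h0).differentiableAt.hasDerivAt
    have hg2' : HasDerivAt g2 (deriv g2 0) 0 := (hg2a 0 h0).differentiableAt.hasDerivAt
    have hf1' : HasDerivAt f1 (f2 (G 0)) (G 0) := (hf1a _ hGz).differentiableAt.hasDerivAt
    have hf2' : HasDerivAt f2 (deriv f2 (G 0)) (G 0) := (hf2a _ hGz).differentiableAt.hasDerivAt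
    have hd : HasDerivAt (fun w => g2 w + (r:ℂ) * ((f2 (G w) * g1 w) * g1 w + f1 (G w) * g2 w))
        (deriv g2 0 + r * (((deriv f2 (G 0) * g1 0) * g1 0 + f2 (G 0) * g2 0) * g1 0 +
          (f2 (G 0) * g1 0) * g2 0 +
          ((f2 (G 0) * g1 0) * g2 0 + f1 (G 0) * deriv g2 0))) 0 := by
      exact hg2'.add (((((hf2'.comp 0 hG').mul hg1').mul hg1').add
        (((hf1'.comp 0 hG').mul hg2'))).const_mul (r:ℂ))
    have hev : (fun w => g2 w + (r:ℂ) * ((f2 (G w) * g1 w) * g1 w + f1 (G w) * g2 w))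
        =ᶠ[nhds 0] fun _ => (0:ℂ) := by
      filter_upwards [hball.mem_nhds h0] with w hw using key2 w hw
    have h3 := hev.deriv_eq
    rw [hd.deriv, deriv_const] at h3
    have hi3 : iteratedDeriv 3 G 0 = deriv g2 0 := by
      simp [hg1def, hg2def, iteratedDeriv_succ, iteratedDeriv_zero]
    rw [hG0] at h3
    rw [hi3]
    linear_combination h3
  -- rewrite iterated derivs
  have hi2G : iteratedDeriv 2 G 0 = g2 0 := by
    simp [hg1def, hg2def, iteratedDeriv_succ, iteratedDeriv_zero]
  have hi2f : iteratedDeriv 2 f 0 = f2 0 := by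
    simp [hf1def, hf2def, iteratedDeriv_succ, iteratedDeriv_zero]
  have hi3f : iteratedDeriv 3 f 0 = deriv f2 0 := by
    simp [hf1def, hf2def, iteratedDeriv_succ, iteratedDeriv_zero]
  have hf10 : f1 0 = 1 := hf1
  have e1 : g1 0 + r * (f1 0 * g1 0) = 1 := by
    have := key1 0 h0; rwa [hG0] at this
  have e2 : g2 0 + r * ((f2 0 * g1 0) * g1 0 + f1 0 * g2 0) = 0 := by
    have := key2 0 h0; rwa [hG0] at this
  have hr1 : (1:ℂ) + r ≠ 0 := by
    intro h
    have := congrArg Complex.re h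
    simp at this
    linarith
  rw [hf10] at e1 e2 key3
  have q1 : g1 0 * (1 + (r:ℂ)) = 1 := by linear_combination e1
  have q2 : g2 0 * (1 + (r:ℂ))^3 + (r:ℂ) * f2 0 = 0 := by
    linear_combination ((1:ℂ)+r)^2 * e2 + (-(r:ℂ)*(f2 0)*(g1 0*(1+(r:ℂ))+1)) * q1
  have q3 : iteratedDeriv 3 G 0 * (1 + (r:ℂ))^5 =
      3*(r:ℂ)^2*(f2 0)^2 - (r:ℂ)*(deriv f2 0)*(1+(r:ℂ)) := by
    linear_combination ((1:ℂ)+r)^4 * key3 +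
      (-(r:ℂ)*(deriv f2 0)*(1+(r:ℂ))*((g1 0)^2*(1+(r:ℂ))^2 + g1 0*(1+(r:ℂ))+1)
        - 3*(r:ℂ)*(f2 0)*(g2 0)*(1+(r:ℂ))^3) * q1 + (-3*(r:ℂ)*(f2 0)) * q2
  have hB1 : g1 0 = 1 / (1 + (r:ℂ)) := by
    field_simp
    linear_combination q1
  have hB2 : g2 0 = -(r:ℂ) * f2 0 / (1 + (r:ℂ))^3 := by
    field_simp
    linear_combination q2
  have hB3 : iteratedDeriv 3 G 0 =
      3 * (r:ℂ)^2 * (f2 0)^2 / (1 + (r:ℂ))^5 - (r:ℂ) * deriv f2 0 / (1 + (r:ℂ))^4 := by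
    field_simp
    linear_combination q3
  refine ⟨by rw [hB1], ?_, ?_, ?_⟩
  · rw [hi2G, hi2f, hB2]; ring
  · rw [hi3f, hB3, hi2f]; ring
  · intro lam
    rw [hi2G, hi2f, hi3f, hB1, hB2, hB3]
    simp only [div_eq_mul_inv, mul_inv, ← inv_pow]
    ring
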